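/- Let μ_S, μ_B be probability measures on a measurable space X with μ_S absolutely continuous with respect to μ_B, with Radon–Nikodym derivative L = dμ_S/dμ_B. For 0 ≤ f2 < f1 ≤ 1, define mixture measures μ_{M1} = f1·μ_S + (1−f1)·μ_B and μ_{M2} = f2·μ_S + (1−f2)·μ_B. Then μ_{M1} is absolutely continuous with respect to μ_{M2}, and dμ_{M1}/dμ_{M2} = (f1·L + (1−f1))/(f2·L + (1−f2)) holds μ_{M2}-almost everywhere. -/

import Mathlib

open MeasureTheory

theorem cwola_measure {X : Type*} [MeasurableSpace X]
    (μS μB : Measure X) [IsProbabilityMeasure μS] [IsProbabilityMeasure μB]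
    (hac : μS ≪ μB) (f1 f2 : ℝ) (hf2 : 0 ≤ f2) (hlt : f2 < f1) (hf1 : f1 ≤ 1) :
    (ENNReal.ofReal f1 • μS + ENNReal.ofReal (1 - f1) • μB) ≪
      (ENNReal.ofReal f2 • μS + ENNReal.ofReal (1 - f2) • μB) ∧
    (ENNReal.ofReal f1 • μS + ENNReal.ofReal (1 - f1) • μB).rnDeriv
        (ENNReal.ofReal f2 • μS + ENNReal.ofReal (1 - f2) • μB)
      =ᵐ[ENNReal.ofReal f2 • μS + ENNReal.ofReal (1 - f2) • μB]
      fun x => (ENNReal.ofReal f1 * μS.rnDeriv μB x + ENNReal.ofReal (1 - f1)) /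
        (ENNReal.ofReal f2 * μS.rnDeriv μB x + ENNReal.ofReal (1 - f2)) := by
  set L : X → ENNReal := μS.rnDeriv μB with hL
  set c1 := ENNReal.ofReal f1
  set d1 := ENNReal.ofReal (1 - f1)
  set c2 := ENNReal.ofReal f2
  set d2 := ENNReal.ofReal (1 - f2)
  have hd2pos : 0 < d2 := ENNReal.ofReal_pos.mpr (by linarith)
  have hd2ne : d2 ≠ 0 := hd2pos.ne'
  have hd2top : d2 ≠ ⊤ := ENNReal.ofReal_ne_top
  have hc2top : c2 ≠ ⊤ := ENNReal.ofReal_ne_top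
  have hLmeas : Measurable L := Measure.measurable_rnDeriv μS μB
  set g1 : X → ENNReal := fun x => c1 * L x + d1 with hg1
  set g2 : X → ENNReal := fun x => c2 * L x + d2 with hg2
  have hg1meas : Measurable g1 := (hLmeas.const_mul _).add_const _
  have hg2meas : Measurable g2 := (hLmeas.const_mul _).add_const _
  have hM1 : (c1 • μS + d1 • μB) = μB.withDensity g1 := by
    rw [hg1]
    rw [show (fun x => c1 * L x + d1) = (fun x => c1 * L x) + fun _ => d1 from rfl]
    rw [withDensity_add_left (hLmeas.const_mul _), withDensity_const,
      show (fun x => c1 * L x) = c1 • L from rfl, withDensity_smul _ hLmeas,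
      Measure.withDensity_rnDeriv_eq _ _ hac]
  have hM2 : (c2 • μS + d2 • μB) = μB.withDensity g2 := by
    rw [hg2]
    rw [show (fun x => c2 * L x + d2) = (fun x => c2 * L x) + fun _ => d2 from rfl]
    rw [withDensity_add_left (hLmeas.const_mul _), withDensity_const,
      show (fun x => c2 * L x) = c2 • L from rfl, withDensity_smul _ hLmeas,
      Measure.withDensity_rnDeriv_eq _ _ hac]
  set g : X → ENNReal := fun x => g1 x / g2 x with hg
  have hgmeas : Measurable g := hg1meas.div hg2meas
  -- key: μB.withDensity g1 = (μB.withDensity g2).withDensity g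
  have hkey : μB.withDensity g1 = (μB.withDensity g2).withDensity g := by
    rw [← withDensity_mul _ hg2meas hgmeas]
    refine withDensity_congr_ae ?_
    filter_upwards [Measure.rnDeriv_lt_top μS μB] with x hx
    have h2ne : g2 x ≠ 0 := by
      simp only [hg2]
      exact fun h => hd2ne (by simpa using (add_eq_zero.mp h).2)
    have h2top : g2 x ≠ ⊤ := by
      simp only [hg2]
      exact ENNReal.add_ne_top.mpr ⟨ENNReal.mul_ne_top hc2top hx.ne, hd2top⟩
    exact (ENNReal.mul_div_cancel h2ne h2top).symm
  have hM2fin : IsFiniteMeasure (μB.withDensity g2) := by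
    rw [← hM2]
    refine ⟨?_⟩
    simp only [Measure.add_apply, Measure.smul_apply, smul_eq_mul, measure_univ, mul_one]
    exact ENNReal.add_lt_top.mpr ⟨hc2top.lt_top, hd2top.lt_top⟩
  constructor
  · rw [hM1, hM2, hkey]
    exact withDensity_absolutelyContinuous _ _
  · have := Measure.rnDeriv_withDensity (μB.withDensity g2) hgmeas
    rw [hM1, hM2, hkey]
    exact this
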